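/- Fix an integer n ≥ 2 and let S_n = W_{<n} ∪ {α, β} be the semigroup of non-empty words over ℕ of length < n together with symbols α, β (multiplication: any product with a factor α or β equals α; two words multiply by concatenation if the total length is < n, give β if the total length is exactly n, and give α if the total length exceeds n). For q ≥ 1 let A_{n,q} := {α} ∪ {[m] : m ≥ q}. Then for every q ≥ 1, the n-fold product set satisfies A_{n,q}^n = {α, β}, and for every h > n the h-fold product set satisfies A_{n,q}^h = {α}. -/

import Mathlib

open Pointwise

/-- The carrier `S_n = W_{<n} ∪ {α, β}`: non-empty words over the alphabet
`ℕ = {1, 2, 3, …}` (encoded as `ℕ+`) of length `< n`, together with two extra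
symbols `α` and `β`. -/
inductive Sn (n : ℕ) : Type where
  | word : (l : List ℕ+) → l ≠ [] → l.length < n → Sn n
  | alpha : Sn n
  | beta : Sn n

/-- Multiplication on `S_n`: any product with a factor `α` or `β` equals `α`; two words
multiply by concatenation if the total length is `< n`, give `β` if the total length is
exactly `n`, and give `α` if the total length exceeds `n`. -/
def Sn.mul {n : ℕ} : Sn n → Sn n → Sn n
  | .word u hu _, .word v hv _ =>
      if h : u.length + v.length < n then
        .word (u ++ v) (by simp [hu, hv]) (by simpa using h)
      else if u.length + v.length = n then .beta else .alpha
  | _, _ => .alpha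

instance (n : ℕ) : Mul (Sn n) := ⟨Sn.mul⟩

/-- The `h`-fold product set `B^h = {b₁ ⋯ b_h : b₁, …, b_h ∈ B}` for `h ≥ 1`
(the value at `h = 0` is junk). -/
def prodSet {S : Type*} [Mul S] (B : Set S) : ℕ → Set S
  | 0 => ∅
  | 1 => B
  | n + 2 => prodSet B (n + 1) * B

/-- The subset `A_{n,q} = {α} ∪ {[m] : m ≥ q}` of `S_n`, where `[m]` is the one-letter
word whose only letter is `m`. -/
def Aset (n : ℕ) (q : ℕ+) : Set (Sn n) :=
  {x | x = Sn.alpha ∨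
    ∃ (m : ℕ+) (hn : 1 < n), q ≤ m ∧ x = Sn.word [m] (List.cons_ne_nil m []) (by simpa using hn)}

/- auxiliary lemmas -/

lemma Sn.word_eq {n : ℕ} {l l' : List ℕ+} {h1 h2 h1' h2'} (h : l = l') :
    (Sn.word l h1 h2 : Sn n) = Sn.word l' h1' h2' := by subst h; rfl

lemma Sn.alpha_mul {n : ℕ} (y : Sn n) : Sn.alpha * y = Sn.alpha := by
  cases y <;> rfl

lemma Sn.mul_alpha {n : ℕ} (x : Sn n) : x * Sn.alpha = Sn.alpha := by
  cases x <;> rfl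

lemma Sn.beta_mul {n : ℕ} (y : Sn n) : Sn.beta * y = Sn.alpha := by
  cases y <;> rfl

lemma Sn.word_mul_word_lt {n : ℕ} {u v : List ℕ+} {hu hv hu' hv'}
    (h : u.length + v.length < n) :
    (Sn.word u hu hu' : Sn n) * Sn.word v hv hv' =
      Sn.word (u ++ v) (by simp [hu]) (by simpa using h) := by
  show Sn.mul _ _ = _
  simp only [Sn.mul, dif_pos h]

lemma Sn.word_mul_word_eq {n : ℕ} {u v : List ℕ+} {hu hv hu' hv'}
    (h : u.length + v.length = n) :
    (Sn.word u hu hu' : Sn n) * Sn.word v hv hv' = Sn.beta := by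
  show Sn.mul _ _ = _
  simp [Sn.mul, h]

lemma prodSet_succ {S : Type*} [Mul S] (B : Set S) (k : ℕ) (hk : 1 ≤ k) :
    prodSet B (k + 1) = prodSet B k * B := by
  match k, hk with
  | (j+1), _ => rfl

def Lev (n : ℕ) (q : ℕ+) (k : ℕ) : Set (Sn n) :=
  {x | x = Sn.alpha ∨ ∃ (l : List ℕ+) (h1 : l ≠ []) (h2 : l.length < n),
      l.length = k ∧ (∀ m ∈ l, q ≤ m) ∧ x = Sn.word l h1 h2}

lemma alpha_mem_Aset (n : ℕ) (q : ℕ+) : Sn.alpha ∈ Aset n q := Or.inl rfl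

lemma single_mem_Aset {n : ℕ} (hn : 2 ≤ n) {q m : ℕ+} (hm : q ≤ m) :
    (Sn.word [m] (List.cons_ne_nil m []) (by simp; omega) : Sn n) ∈ Aset n q := by
  exact Or.inr ⟨m, by omega, hm, rfl⟩

lemma Lev_one {n : ℕ} (hn : 2 ≤ n) (q : ℕ+) : Lev n q 1 = Aset n q := by
  ext x
  constructor
  · rintro (rfl | ⟨l, h1, h2, hlen, hq, rfl⟩)
    · exact alpha_mem_Aset _ q
    · match l, hlen with
      | [m], _ =>
        exact Or.inr ⟨m, by omega, hq m (by simp), rfl⟩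
  · rintro (rfl | ⟨m, hn', hm, rfl⟩)
    · exact Or.inl rfl
    · exact Or.inr ⟨[m], by simp, by simpa using hn', by simp, by simpa using hm, rfl⟩

lemma prodSet_eq_Lev {n : ℕ} (hn : 2 ≤ n) (q : ℕ+) :
    ∀ k, 1 ≤ k → k < n → prodSet (Aset n q) k = Lev n q k := by
  intro k
  induction k with
  | zero => omega
  | succ j ih =>
    intro _ hkn
    rcases Nat.eq_or_lt_of_le (show 1 ≤ j + 1 from by omega) with h1 | h1
    · -- j = 0
      have : j = 0 := by omega
      subst this
      show prodSet (Aset n q) 1 = Lev n q 1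
      rw [Lev_one hn]
      rfl
    · have hj1 : 1 ≤ j := by omega
      rw [prodSet_succ _ _ (by omega), ih hj1 (by omega)]
      ext x
      constructor
      · rintro ⟨y, hy, a, ha, rfl⟩
        dsimp only
        rcases hy with rfl | ⟨l, h1l, h2l, hlen, hq, rfl⟩
        · rw [Sn.alpha_mul]; exact Or.inl rfl
        · rcases ha with rfl | ⟨m, hn', hm, rfl⟩
          · rw [Sn.mul_alpha]; exact Or.inl rfl
          · have hlt : l.length + ([m] : List ℕ+).length < n := by
              simp only [List.length_singleton]; omega
            rw [Sn.word_mul_word_lt hlt]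
            refine Or.inr ⟨l ++ [m], by simp [h1l], by simpa using hlt,
              by simp [hlen], ?_, rfl⟩
            intro x hx
            rcases List.mem_append.1 hx with h | h
            · exact hq x h
            · simp at h; subst h; exact hm
      · rintro (rfl | ⟨l, h1l, h2l, hlen, hq, rfl⟩)
        · exact ⟨Sn.alpha, Or.inl rfl, Sn.alpha, alpha_mem_Aset _ q, Sn.mul_alpha _⟩
        · -- split l = l.dropLast ++ [l.getLast]
          have hne : l ≠ [] := h1l
          have hsplit : l.dropLast ++ [l.getLast hne] = l := List.dropLast_append_getLast hne
          have hdlen : l.dropLast.length = j := by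
            have : l.dropLast.length = l.length - 1 := List.length_dropLast
            omega
          have hdne : l.dropLast ≠ [] := by
            intro h
            rw [h] at hdlen
            simp at hdlen
            omega
          have hmlast : q ≤ l.getLast hne := hq _ (List.getLast_mem hne)
          refine ⟨Sn.word l.dropLast hdne (by omega),
            Or.inr ⟨l.dropLast, hdne, by omega, hdlen, fun x hx => hq x (List.mem_of_mem_dropLast hx), rfl⟩,
            Sn.word [l.getLast hne] (List.cons_ne_nil _ []) (by simp; omega),
            single_mem_Aset hn hmlast, ?_⟩
          dsimp only
          rw [Sn.word_mul_word_lt (by simp [hdlen]; omega)]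
          exact Sn.word_eq hsplit

/-- For `n ≥ 2` and `q ≥ 1`, the `n`-fold product set of `A_{n,q}` equals `{α, β}`,
and for every `h > n` the `h`-fold product set of `A_{n,q}` equals `{α}`. -/
theorem stmt_7 (n : ℕ) (hn : 2 ≤ n) (q : ℕ+) :
    prodSet (Aset n q) n = {Sn.alpha, Sn.beta} ∧
    ∀ h : ℕ, n < h → prodSet (Aset n q) h = {Sn.alpha} := by
  have hlevn : prodSet (Aset n q) n = {Sn.alpha, Sn.beta} := by
    obtain ⟨k, rfl⟩ : ∃ k, n = k + 1 := ⟨n - 1, by omega⟩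
    rw [prodSet_succ _ _ (by omega), prodSet_eq_Lev hn q k (by omega) (by omega)]
    ext x
    constructor
    · rintro ⟨y, hy, a, ha, rfl⟩
      dsimp only
      rcases hy with rfl | ⟨l, h1l, h2l, hlen, hq, rfl⟩
      · rw [Sn.alpha_mul]; exact Or.inl rfl
      · rcases ha with rfl | ⟨m, hn', hm, rfl⟩
        · rw [Sn.mul_alpha]; exact Or.inl rfl
        · rw [Sn.word_mul_word_eq (by simp [hlen])]
          exact Or.inr rfl
    · rintro (rfl | rfl)
      · exact ⟨Sn.alpha, Or.inl rfl, Sn.alpha, alpha_mem_Aset _ q, Sn.mul_alpha _⟩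
      · -- word of length k: replicate k q
        have hrep : (List.replicate k q : List ℕ+) ≠ [] := by
          simp only [ne_eq, List.replicate_eq_nil_iff]; omega
        refine ⟨Sn.word (List.replicate k q) hrep (by simp only [List.length_replicate]; omega),
          Or.inr ⟨_, hrep, by simp only [List.length_replicate]; omega, by simp, fun x hx => le_of_eq (List.eq_of_mem_replicate hx).symm, rfl⟩,
          Sn.word [q] (List.cons_ne_nil _ []) (by simp; omega),
          single_mem_Aset hn le_rfl, ?_⟩
        dsimp only
        rw [Sn.word_mul_word_eq (by simp)]
  refine ⟨hlevn, ?_⟩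
  intro h hh
  induction h with
  | zero => omega
  | succ j ih =>
    rcases Nat.lt_or_ge n j with hj | hj
    · rw [prodSet_succ _ _ (by omega), ih hj]
      ext x
      constructor
      · rintro ⟨y, hy, a, ha, rfl⟩
        dsimp only
        rcases hy with rfl
        rw [Sn.alpha_mul]; rfl
      · rintro rfl
        exact ⟨Sn.alpha, rfl, Sn.alpha, alpha_mem_Aset _ q, Sn.mul_alpha _⟩
    · have : j = n := by omega
      subst this
      rw [prodSet_succ _ _ (by omega), hlevn]
      ext x
      constructor
      · rintro ⟨y, hy, a, ha, rfl⟩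
        dsimp only
        rcases hy with rfl | rfl
        · rw [Sn.alpha_mul]; rfl
        · rw [Sn.beta_mul]; rfl
      · rintro rfl
        exact ⟨Sn.alpha, Or.inl rfl, Sn.alpha, alpha_mem_Aset _ q, Sn.mul_alpha _⟩
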